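/- Let p be prime, a ≤ b, and (v₁p^c, v₂p^d) a point on T_{p^a,p^b} where p divides neither v₁ nor v₂, c < a, d < b, and c ≤ d. Then every line on T_{p^a,p^b} containing the origin and (v₁p^c, v₂p^d) also contains a point (w₁,w₂) with w₁ ≡ v₁ (mod p^{a−c}) and w₂ ≡ v₂p^{d−c} (mod p^{b−c}). -/

import Mathlib

/-- A line on the discrete torus `ZMod m × ZMod n`: the image of an integer line
`{A + k•(u,v) : k ∈ ℤ}` with `gcd(u,v) = 1`. -/
def torusLine (m n : ℕ) (L : Set (ZMod m × ZMod n)) : Prop :=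
  ∃ (A : ZMod m × ZMod n) (u v : ℤ), Int.gcd u v = 1 ∧
    L = {P | ∃ k : ℤ, P = (A.1 + ((k * u : ℤ) : ZMod m), A.2 + ((k * v : ℤ) : ZMod n))}

/-- Three points of the torus are collinear if some line contains all three. -/
def torusCollinear (m n : ℕ) (P Q R : ZMod m × ZMod n) : Prop :=
  ∃ L, torusLine m n L ∧ P ∈ L ∧ Q ∈ L ∧ R ∈ L

/-- No three (distinct) points of `S` lie on a common line. -/
def noThreeInLine (m n : ℕ) (S : Set (ZMod m × ZMod n)) : Prop :=
  ∀ P ∈ S, ∀ Q ∈ S, ∀ R ∈ S, P ≠ Q → P ≠ R → Q ≠ R → ¬ torusCollinear m n P Q R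

/-- `tau m n`: maximal number of points on the torus with no three collinear. -/
noncomputable def tau (m n : ℕ) : ℕ :=
  sSup {k | ∃ S : Finset (ZMod m × ZMod n), noThreeInLine m n ↑S ∧ S.card = k}

theorem stmt16 (p a b c d : ℕ) (hp : p.Prime) (hab : a ≤ b)
    (hc : c < a) (hd : d < b) (hcd : c ≤ d)
    (v₁ v₂ : ℤ) (hv₁ : ¬ (p : ℤ) ∣ v₁) (hv₂ : ¬ (p : ℤ) ∣ v₂) :
    ∀ L : Set (ZMod (p ^ a) × ZMod (p ^ b)), torusLine (p ^ a) (p ^ b) L →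
      (0 : ZMod (p ^ a) × ZMod (p ^ b)) ∈ L →
      (((v₁ * p ^ c : ℤ) : ZMod (p ^ a)), ((v₂ * p ^ d : ℤ) : ZMod (p ^ b))) ∈ L →
      ∃ w₁ w₂ : ℤ, ((w₁ : ZMod (p ^ a)), (w₂ : ZMod (p ^ b))) ∈ L ∧
        w₁ ≡ v₁ [ZMOD ((p : ℤ) ^ (a - c))] ∧
        w₂ ≡ v₂ * (p : ℤ) ^ (d - c) [ZMOD ((p : ℤ) ^ (b - c))] := by
  intro L hLine h0 hP
  obtain ⟨A, u, v, hguv, rfl⟩ := hLine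
  obtain ⟨k₀, hk₀⟩ := h0
  obtain ⟨k₁, hk₁⟩ := hP
  have hk₀1 : (0 : ZMod (p ^ a)) = A.1 + ((k₀ * u : ℤ) : ZMod (p ^ a)) :=
    congrArg Prod.fst hk₀
  have hk₀2 : (0 : ZMod (p ^ b)) = A.2 + ((k₀ * v : ℤ) : ZMod (p ^ b)) :=
    congrArg Prod.snd hk₀
  have hk₁1 : ((v₁ * p ^ c : ℤ) : ZMod (p ^ a)) = A.1 + ((k₁ * u : ℤ) : ZMod (p ^ a)) :=
    congrArg Prod.fst hk₁
  have hk₁2 : ((v₂ * p ^ d : ℤ) : ZMod (p ^ b)) = A.2 + ((k₁ * v : ℤ) : ZMod (p ^ b)) :=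
    congrArg Prod.snd hk₁
  set t : ℤ := k₁ - k₀ with ht
  have hA1 : A.1 = -((k₀ * u : ℤ) : ZMod (p ^ a)) :=
    eq_neg_of_add_eq_zero_left hk₀1.symm
  have hA2 : A.2 = -((k₀ * v : ℤ) : ZMod (p ^ b)) :=
    eq_neg_of_add_eq_zero_left hk₀2.symm
  have hpc : ((p : ℤ) ^ c) ≠ 0 := pow_ne_zero _ (by exact_mod_cast hp.ne_zero)
  have h1 : ((p : ℤ) ^ a) ∣ t * u - v₁ * p ^ c := by
    have : ((t * u - v₁ * p ^ c : ℤ) : ZMod (p ^ a)) = 0 := by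
      push_cast [ht]
      rw [hA1] at hk₁1
      push_cast at hk₁1
      linear_combination -hk₁1
    rw [ZMod.intCast_zmod_eq_zero_iff_dvd] at this
    push_cast at this
    exact this
  have h2 : ((p : ℤ) ^ b) ∣ t * v - v₂ * p ^ d := by
    have : ((t * v - v₂ * p ^ d : ℤ) : ZMod (p ^ b)) = 0 := by
      push_cast [ht]
      rw [hA2] at hk₁2
      push_cast at hk₁2
      linear_combination -hk₁2
    rw [ZMod.intCast_zmod_eq_zero_iff_dvd] at this
    push_cast at this
    exact this
  have hcu : ((p : ℤ) ^ c) ∣ t * u := by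
    have h3 : ((p : ℤ) ^ c) ∣ t * u - v₁ * p ^ c :=
      dvd_trans (pow_dvd_pow _ hc.le) h1
    have h4 : ((p : ℤ) ^ c) ∣ v₁ * p ^ c := Dvd.intro_left _ rfl
    simpa using dvd_add h3 h4
  have hcv : ((p : ℤ) ^ c) ∣ t * v := by
    have h3 : ((p : ℤ) ^ c) ∣ t * v - v₂ * p ^ d :=
      dvd_trans (pow_dvd_pow _ (hcd.trans hd.le)) h2
    have h4 : ((p : ℤ) ^ c) ∣ v₂ * p ^ d :=
      Dvd.dvd.mul_left (pow_dvd_pow _ hcd) _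
    simpa using dvd_add h3 h4
  have hct : ((p : ℤ) ^ c) ∣ t := by
    have hg := Int.dvd_gcd hcu hcv
    rw [Int.gcd_mul_left, hguv, mul_one] at hg
    exact Int.dvd_natAbs.mp (by exact_mod_cast hg)
  obtain ⟨s, hs⟩ := hct
  have hsa : ((p : ℤ) ^ a) = (p : ℤ) ^ c * (p : ℤ) ^ (a - c) := by
    rw [← pow_add]; congr 1; omega
  have hsb : ((p : ℤ) ^ b) = (p : ℤ) ^ c * (p : ℤ) ^ (b - c) := by
    rw [← pow_add]; congr 1; omega
  have hsd : ((p : ℤ) ^ d) = (p : ℤ) ^ c * (p : ℤ) ^ (d - c) := by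
    rw [← pow_add]; congr 1; omega
  refine ⟨s * u, s * v, ⟨k₀ + s, ?_⟩, ?_, ?_⟩
  · rw [hA1, hA2, Prod.ext_iff]
    constructor <;> · push_cast; ring
  · rw [Int.modEq_iff_dvd]
    have : ((p : ℤ) ^ c) * ((p : ℤ) ^ (a - c)) ∣ (p : ℤ) ^ c * (v₁ - s * u) := by
      rw [← hsa]
      have : t * u - v₁ * p ^ c = -((p:ℤ) ^ c * (v₁ - s * u)) := by rw [hs]; ring
      rw [this] at h1
      exact (dvd_neg).mp h1
    exact (mul_dvd_mul_iff_left hpc).mp this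
  · rw [Int.modEq_iff_dvd]
    have : ((p : ℤ) ^ c) * ((p : ℤ) ^ (b - c)) ∣ (p : ℤ) ^ c * (v₂ * p ^ (d - c) - s * v) := by
      rw [← hsb]
      have : t * v - v₂ * p ^ d = -((p:ℤ) ^ c * (v₂ * p ^ (d - c) - s * v)) := by
        rw [hs, hsd]; ring
      rw [this] at h2
      exact (dvd_neg).mp h2
    exact (mul_dvd_mul_iff_left hpc).mp this
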